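/- arXiv:1104.3533 — 3 statements merged into one kernel-verified Lean document; each statement's English description precedes it below -/
import Mathlib

section
/- For every k ∈ ℤ, γ_k = U_k(a)·γ + U_{k−1}(a)·δ and δ_k = U_{k−1}(a)·γ + U_k(a)·δ. -/
variable {V : Type*} [AddCommGroup V] [Module ℝ V]

/-- The reflection `s_μ` in a unit vector `μ`, acting by `s_μ(v) = v - 2 B(v,μ) μ`. -/
def reflVec (BF : LinearMap.BilinForm ℝ V) (μ v : V) : V :=
  v - (2 * BF v μ) • μ

/-- With `a = −B(γ,δ)` and `U` the (shifted) Chebyshev polynomials of the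
second kind, `γ_k = U_k(a) γ + U_{k−1}(a) δ` and `δ_k = U_{k−1}(a) γ + U_k(a) δ` for all
`k ∈ ℤ`. -/
theorem localRootSeq_eq_chebyshev
    (BF : LinearMap.BilinForm ℝ V) (hsymm : ∀ u v : V, BF u v = BF v u)
    (γ δ : V) (hγ : BF γ γ = 1) (hδ : BF δ δ = 1)
    (gs ds : ℤ → V) (hg1 : gs 1 = γ) (hd1 : ds 1 = δ)
    (hgrec : ∀ i : ℤ, gs (i + 1) = reflVec BF γ (ds i))
    (hdrec : ∀ i : ℤ, ds (i + 1) = reflVec BF δ (gs i))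
    (a : ℝ) (ha : a = - BF γ δ)
    (U : ℤ → ℝ → ℝ) (hU0 : ∀ x : ℝ, U 0 x = 0) (hU1 : ∀ x : ℝ, U 1 x = 1)
    (hUrec : ∀ (n : ℤ) (x : ℝ), U (n + 2) x = 2 * x * U (n + 1) x - U n x) :
    ∀ k : ℤ, gs k = U k a • γ + U (k - 1) a • δ ∧ ds k = U (k - 1) a • γ + U k a • δ := by
  have hγδ : BF γ δ = -a := by rw [ha]; ring
  have hδγ : BF δ γ = -a := by rw [hsymm]; exact hγδ
  have hUm1 : U (-1) a = -1 := by
    have h := hUrec (-1) a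
    rw [show (-1 : ℤ) + 2 = 1 by ring, show (-1 : ℤ) + 1 = 0 by ring, hU1, hU0] at h
    linarith
  have hrg : ∀ p q : ℝ, reflVec BF γ (p • γ + q • δ) = (2 * a * q - p) • γ + q • δ := by
    intro p q
    simp only [reflVec, map_add, map_smul, LinearMap.add_apply, LinearMap.smul_apply,
      smul_eq_mul, hγ, hδγ]
    module
  have hrd : ∀ p q : ℝ, reflVec BF δ (p • γ + q • δ) = p • γ + (2 * a * p - q) • δ := by
    intro p q
    simp only [reflVec, map_add, map_smul, LinearMap.add_apply, LinearMap.smul_apply,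
      smul_eq_mul, hδ, hγδ]
    module
  have hinv : ∀ (μ v : V), BF μ μ = 1 → reflVec BF μ (reflVec BF μ v) = v := by
    intro μ v h
    simp only [reflVec, map_sub, map_smul, LinearMap.sub_apply, LinearMap.smul_apply,
      smul_eq_mul, h]
    module
  -- values at 0
  have hg0 : gs 0 = -δ := by
    have h := hdrec 0
    rw [zero_add, hd1] at h
    have h2 := congrArg (reflVec BF δ) h
    rw [hinv δ (gs 0) hδ] at h2
    rw [← h2]
    simp only [reflVec, hδ]
    module
  have hd0 : ds 0 = -γ := by
    have h := hgrec 0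
    rw [zero_add, hg1] at h
    have h2 := congrArg (reflVec BF γ) h
    rw [hinv γ (ds 0) hγ] at h2
    rw [← h2]
    simp only [reflVec, hγ]
    module
  intro k
  induction k using Int.induction_on with
  | zero =>
    rw [hU0, show (0 : ℤ) - 1 = -1 by ring, hUm1, hg0, hd0]
    constructor <;> module
  | succ n ih =>
    obtain ⟨ihg, ihd⟩ := ih
    have e1 : ((n : ℤ) + 1) - 1 = (n : ℤ) := by ring
    have eU : U ((n : ℤ) + 1) a = 2 * a * U (n : ℤ) a - U ((n : ℤ) - 1) a := by
      have h := hUrec ((n : ℤ) - 1) a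
      rw [show ((n : ℤ) - 1) + 2 = (n : ℤ) + 1 by ring,
        show ((n : ℤ) - 1) + 1 = (n : ℤ) by ring] at h
      exact h
    constructor
    · rw [hgrec (n : ℤ), ihd, hrg, e1, eU]
    · rw [hdrec (n : ℤ), ihg]
      rw [hrd, e1, eU]
  | pred n ih =>
    obtain ⟨ihg, ihd⟩ := ih
    have e1 : (-(n : ℤ) - 1) - 1 = -(n : ℤ) - 2 := by ring
    have eU : U (-(n : ℤ) - 2) a = 2 * a * U (-(n : ℤ) - 1) a - U (-(n : ℤ)) a := by
      have h := hUrec (-(n : ℤ) - 2) a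
      rw [show (-(n : ℤ) - 2) + 2 = -(n : ℤ) by ring,
        show (-(n : ℤ) - 2) + 1 = -(n : ℤ) - 1 by ring] at h
      linarith
    have hginv : gs (-(n : ℤ) - 1) = reflVec BF δ (ds (-(n : ℤ))) := by
      have h := hdrec (-(n : ℤ) - 1)
      rw [show (-(n : ℤ) - 1) + 1 = -(n : ℤ) by ring] at h
      have h2 := congrArg (reflVec BF δ) h
      rw [hinv δ (gs (-(n : ℤ) - 1)) hδ] at h2
      rw [h2]
    have hdinv : ds (-(n : ℤ) - 1) = reflVec BF γ (gs (-(n : ℤ))) := by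
      have h := hgrec (-(n : ℤ) - 1)
      rw [show (-(n : ℤ) - 1) + 1 = -(n : ℤ) by ring] at h
      have h2 := congrArg (reflVec BF γ) h
      rw [hinv γ (ds (-(n : ℤ) - 1)) hγ] at h2
      rw [h2]
    constructor
    · rw [hginv, ihd, hrd, e1, ← eU]
    · rw [hdinv, ihg, hrg, e1, ← eU]
end

section
/- For every i ≥ 1 and every j ∈ ℤ, s_{γ_i}(γ_j) = δ_{j − 2i + 1} and s_{δ_i}(δ_j) = γ_{j − 2i + 1}. -/
variable {V : Type*} [AddCommGroup V] [Module ℝ V]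

lemma reflVec_invol (BF : LinearMap.BilinForm ℝ V) {μ : V} (hμ : BF μ μ = 1) (v : V) :
    reflVec BF μ (reflVec BF μ v) = v := by
  simp only [reflVec, map_sub, map_smul, LinearMap.sub_apply, LinearMap.smul_apply,
    smul_eq_mul, hμ]
  module

lemma reflVec_isom (BF : LinearMap.BilinForm ℝ V) (hsymm : ∀ u v : V, BF u v = BF v u)
    {μ : V} (hμ : BF μ μ = 1) (u v : V) :
    BF (reflVec BF μ u) (reflVec BF μ v) = BF u v := by
  simp only [reflVec, map_sub, map_smul, LinearMap.sub_apply, LinearMap.smul_apply,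
    smul_eq_mul, hμ]
  rw [hsymm μ v]
  ring

lemma reflVec_sub_smul (BF : LinearMap.BilinForm ℝ V) (μ x y : V) (c : ℝ) :
    reflVec BF μ (x - c • y) = reflVec BF μ x - c • reflVec BF μ y := by
  simp only [reflVec, map_sub, map_smul, LinearMap.sub_apply, LinearMap.smul_apply,
    smul_eq_mul]
  module

lemma reflVec_conj (BF : LinearMap.BilinForm ℝ V) (hsymm : ∀ u v : V, BF u v = BF v u)
    {μ₀ : V} (hμ₀ : BF μ₀ μ₀ = 1) (μ v : V) :
    reflVec BF (reflVec BF μ₀ μ) v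
      = reflVec BF μ₀ (reflVec BF μ (reflVec BF μ₀ v)) := by
  conv_rhs => rw [show reflVec BF μ (reflVec BF μ₀ v)
      = reflVec BF μ₀ v - (2 * BF (reflVec BF μ₀ v) μ) • μ from rfl]
  rw [reflVec_sub_smul, reflVec_invol BF hμ₀]
  have : BF (reflVec BF μ₀ v) μ = BF v (reflVec BF μ₀ μ) := by
    conv_rhs => rw [← reflVec_invol BF hμ₀ v, reflVec_isom BF hsymm hμ₀]
  rw [this]
  rfl

/-- For every `i ≥ 1` and every `j ∈ ℤ`,
`s_{γ_i}(γ_j) = δ_{j − 2i + 1}` and `s_{δ_i}(δ_j) = γ_{j − 2i + 1}`. -/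
theorem reflVec_localRootSeq
    (BF : LinearMap.BilinForm ℝ V) (hsymm : ∀ u v : V, BF u v = BF v u)
    (γ δ : V) (hγ : BF γ γ = 1) (hδ : BF δ δ = 1)
    (gs ds : ℤ → V) (hg1 : gs 1 = γ) (hd1 : ds 1 = δ)
    (hgrec : ∀ i : ℤ, gs (i + 1) = reflVec BF γ (ds i))
    (hdrec : ∀ i : ℤ, ds (i + 1) = reflVec BF δ (gs i)) :
    ∀ i : ℤ, 1 ≤ i → ∀ j : ℤ,
      reflVec BF (gs i) (gs j) = ds (j - 2 * i + 1) ∧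
      reflVec BF (ds i) (ds j) = gs (j - 2 * i + 1) := by
  -- base identities: s_γ gs j = ds (j-1), s_δ ds j = gs (j-1)
  have hbg : ∀ j : ℤ, reflVec BF γ (gs j) = ds (j - 1) := by
    intro j
    have := hgrec (j - 1)
    rw [sub_add_cancel] at this
    rw [this, reflVec_invol BF hγ]
  have hbd : ∀ j : ℤ, reflVec BF δ (ds j) = gs (j - 1) := by
    intro j
    have := hdrec (j - 1)
    rw [sub_add_cancel] at this
    rw [this, reflVec_invol BF hδ]
  have key : ∀ n : ℕ, ∀ j : ℤ,
      reflVec BF (gs (1 + n)) (gs j) = ds (j - 2 * (1 + n) + 1) ∧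
      reflVec BF (ds (1 + n)) (ds j) = gs (j - 2 * (1 + n) + 1) := by
    intro n
    induction n with
    | zero =>
      intro j
      refine ⟨?_, ?_⟩
      · rw [show ((1 : ℤ) + (0 : ℕ)) = 1 by norm_num, hg1, hbg j]; ring_nf
      · rw [show ((1 : ℤ) + (0 : ℕ)) = 1 by norm_num, hd1, hbd j]; ring_nf
    | succ n ih =>
      intro j
      have e : ((1 : ℤ) + (n + 1 : ℕ)) = (1 + (n : ℤ)) + 1 := by push_cast; ring
      refine ⟨?_, ?_⟩
      · rw [e, hgrec, reflVec_conj BF hsymm hγ, hbg j, (ih (j - 1)).2, hbg]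
        ring_nf
      · rw [e, hdrec, reflVec_conj BF hsymm hδ, hbd j, (ih (j - 1)).1, hbd]
        ring_nf
  intro i hi j
  obtain ⟨n, rfl⟩ : ∃ n : ℕ, i = 1 + n := ⟨(i - 1).toNat, by omega⟩
  exact key n j
end

section
/- Suppose a = −B(γ,δ) = cos(π/m) for an integer m ≥ 2. Then for every i ∈ ℤ, γ_i = δ_{m+1−i} and δ_i = γ_{m+1−i}. -/
variable {V : Type*} [AddCommGroup V] [Module ℝ V]

/-- If `a = −B(γ,δ) = cos (π/m)` for an integer `m ≥ 2`, then for every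
`i ∈ ℤ`, `γ_i = δ_{m+1−i}` and `δ_i = γ_{m+1−i}`. -/
theorem localRootSeq_symmetry
    (BF : LinearMap.BilinForm ℝ V) (hsymm : ∀ u v : V, BF u v = BF v u)
    (γ δ : V) (hγ : BF γ γ = 1) (hδ : BF δ δ = 1)
    (gs ds : ℤ → V) (hg1 : gs 1 = γ) (hd1 : ds 1 = δ)
    (hgrec : ∀ i : ℤ, gs (i + 1) = reflVec BF γ (ds i))
    (hdrec : ∀ i : ℤ, ds (i + 1) = reflVec BF δ (gs i))
    (m : ℕ) (hm : 2 ≤ m) (ha : - BF γ δ = Real.cos (Real.pi / (m : ℝ))) :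
    ∀ i : ℤ, gs i = ds ((m : ℤ) + 1 - i) ∧ ds i = gs ((m : ℤ) + 1 - i) := by
  have hm0 : (m : ℝ) ≠ 0 := by positivity
  set θ : ℝ := Real.pi / m with hθdef
  have hθpos : 0 < θ := by
    apply div_pos Real.pi_pos
    positivity
  have h2m : (2:ℝ) ≤ m := by exact_mod_cast hm
  have hθlt : θ < Real.pi := by
    rw [hθdef, div_lt_iff₀ (by positivity : (0:ℝ) < m)]
    nlinarith [Real.pi_pos, h2m]
  have hs : Real.sin θ ≠ 0 := ne_of_gt (Real.sin_pos_of_pos_of_lt_pi hθpos hθlt)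
  set a : ℝ := Real.cos θ with hadef
  have hγδ : BF γ δ = -a := by linarith [ha]
  have hδγ : BF δ γ = -a := by rw [hsymm]; exact hγδ
  set c : ℤ → ℝ := fun j => Real.sin (j * θ) / Real.sin θ with hc
  have hmθ : (m : ℝ) * θ = Real.pi := by
    rw [hθdef]; field_simp
  have hc0 : c 0 = 0 := by simp [hc]
  have hc1 : c 1 = 1 := by
    simp only [hc, Int.cast_one, one_mul]
    exact div_self hs
  have hcm1 : c (-1) = -1 := by
    simp only [hc]
    push_cast
    rw [neg_one_mul, Real.sin_neg, neg_div]
    rw [div_self hs]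
  have crec : ∀ j : ℤ, c (j + 1) = 2 * a * c j - c (j - 1) := by
    intro j
    have h1 := Real.sin_add ((j : ℝ) * θ) θ
    have h2 := Real.sin_sub ((j : ℝ) * θ) θ
    have e1 : ((j : ℝ) + 1) * θ = (j : ℝ) * θ + θ := by ring
    have e2 : ((j : ℝ) - 1) * θ = (j : ℝ) * θ - θ := by ring
    simp only [hc]
    push_cast
    rw [e1, e2, h1, h2]
    field_simp
    ring
  have hinv : ∀ (μ v : V), BF μ μ = 1 → reflVec BF μ (reflVec BF μ v) = v := by
    intro μ v h
    simp only [reflVec, map_sub, map_smul, LinearMap.sub_apply, LinearMap.smul_apply,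
      smul_eq_mul, h, mul_one]
    module
  have hgrec' : ∀ i : ℤ, ds i = reflVec BF γ (gs (i + 1)) := by
    intro i; rw [hgrec]; exact (hinv γ _ hγ).symm
  have hdrec' : ∀ i : ℤ, gs i = reflVec BF δ (ds (i + 1)) := by
    intro i; rw [hdrec]; exact (hinv δ _ hδ).symm
  have refγ : ∀ x y : ℝ, reflVec BF γ (x • γ + y • δ) = (2 * a * y - x) • γ + y • δ := by
    intro x y
    simp only [reflVec, map_add, map_smul, LinearMap.add_apply, LinearMap.smul_apply,
      smul_eq_mul, hγ, hδγ, mul_one]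
    module
  have refδ : ∀ x y : ℝ, reflVec BF δ (x • γ + y • δ) = x • γ + (2 * a * x - y) • δ := by
    intro x y
    simp only [reflVec, map_add, map_smul, LinearMap.add_apply, LinearMap.smul_apply,
      smul_eq_mul, hδ, hγδ, mul_one]
    module
  have main : ∀ i : ℤ, gs i = c i • γ + c (i - 1) • δ ∧ ds i = c (i - 1) • γ + c i • δ := by
    have fwd : ∀ j : ℤ, (gs j = c j • γ + c (j - 1) • δ ∧ ds j = c (j - 1) • γ + c j • δ) →
        (gs (j + 1) = c (j + 1) • γ + c j • δ ∧ ds (j + 1) = c j • γ + c (j + 1) • δ) := by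
      intro j ⟨h1, h2⟩
      constructor
      · rw [hgrec, h2, refγ, crec j]
      · rw [hdrec, h1, refδ, crec j]
    have bwd : ∀ j : ℤ, (gs j = c j • γ + c (j - 1) • δ ∧ ds j = c (j - 1) • γ + c j • δ) →
        (gs (j - 1) = c (j - 1) • γ + c (j - 2) • δ ∧
          ds (j - 1) = c (j - 2) • γ + c (j - 1) • δ) := by
      intro j ⟨h1, h2⟩
      have hcrec : c ((j - 1) + 1) = 2 * a * c (j - 1) - c ((j - 1) - 1) := crec (j - 1)
      have e : (j - 1 : ℤ) + 1 = j := by ring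
      have e2 : (j - 1 : ℤ) - 1 = j - 2 := by ring
      rw [e, e2] at hcrec
      have hcj : c (j - 2) = 2 * a * c (j - 1) - c j := by linarith
      constructor
      · have := hdrec' (j - 1)
        rw [e] at this
        rw [this, h2, refδ, ← hcj]
      · have := hgrec' (j - 1)
        rw [e] at this
        rw [this, h1, refγ, ← hcj]
    intro i
    induction i using Int.induction_on with
    | zero =>
      have e0 : (1:ℤ) - 1 = 0 := by norm_num
      have h := bwd 1 ⟨by rw [hg1, hc1, e0, hc0]; module,
        by rw [hd1, hc1, e0, hc0]; module⟩
      simpa using h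
    | succ n ih =>
      have e : ((n:ℤ) + 1) - 1 = (n:ℤ) := by ring
      rw [e]
      exact fwd n ih
    | pred n ih =>
      have h := bwd (-(n : ℤ)) ih
      rw [show (-(n:ℤ) - 1 - 1) = -(n:ℤ) - 2 from by ring]
      exact h
  have csym : ∀ j : ℤ, c ((m : ℤ) - j) = c j := by
    intro j
    simp only [hc]
    congr 1
    push_cast
    rw [sub_mul, hmθ, Real.sin_pi_sub]
  intro i
  obtain ⟨h1, h2⟩ := main i
  obtain ⟨h3, h4⟩ := main ((m : ℤ) + 1 - i)
  have e1 : ((m : ℤ) + 1 - i) - 1 = (m : ℤ) - i := by ring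
  have e2 : ((m : ℤ) + 1 - i) = (m : ℤ) - (i - 1) := by ring
  have k1 : c ((m : ℤ) + 1 - i - 1) = c i := by rw [e1, csym]
  have k2 : c ((m : ℤ) + 1 - i) = c (i - 1) := by rw [e2, csym]
  constructor
  · rw [h1, h4, k1, k2]
  · rw [h2, h3, k1, k2]
end
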